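/- Let n ≥ 2 and k ≥ 2 be integers, and let P_{n,k} be the induced subgraph of W_{n,k} obtained by deleting the k vertices w_{n,1}, …, w_{n,k} (the w-vertices with first index n, viewed in ℤ/nℤ). Then at most 3k of the eigenvalues of P_{n,k} (counted with multiplicity) lie outside the set {−1, 1} ∪ [k−1, k+1] ∪ [−k−1, −k+1]. -/

import Mathlib

open Polynomial Matrix

set_option linter.unusedSectionVars false




/-- Vertex set of `W n k`: `Sum.inl (i, j)` is the vertex `v_{i,j}` and
`Sum.inr (i, j)` is the vertex `w_{i,j}`, for `i ∈ ℤ/nℤ` and `j ∈ {1, …, k}`. -/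
abbrev WVert (n k : ℕ) : Type := (ZMod n × Fin k) ⊕ (ZMod n × Fin k)

/-- Adjacency of `W n k`: `v_{i,j} ~ w_{i',l}` iff `i' = i`, or `i = i' + 1` and `j = l`. -/
def WAdj (n k : ℕ) : WVert n k → WVert n k → Prop
  | Sum.inl p, Sum.inr q => q.1 = p.1 ∨ (p.1 = q.1 + 1 ∧ p.2 = q.2)
  | Sum.inr q, Sum.inl p => q.1 = p.1 ∨ (p.1 = q.1 + 1 ∧ p.2 = q.2)
  | Sum.inl _, Sum.inl _ => False
  | Sum.inr _, Sum.inr _ => False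

/-- The graph `W_{n,k}`: vertices `v_{i,j}` and `w_{i,j}` (`i ∈ ℤ/nℤ`, `1 ≤ j ≤ k`),
with edges `v_{i,j} w_{i,l}` for all `i, j, l`, and `w_{i,j} v_{i+1,j}` for all `i, j`. -/
def W (n k : ℕ) : SimpleGraph (WVert n k) where
  Adj := WAdj n k
  symm := ⟨by
    rintro (p | p) (q | q) h
    · exact h.elim
    · exact h
    · exact h
    · exact h.elim⟩
  loopless := ⟨by rintro (p | p) h <;> exact h⟩

instance (n k : ℕ) : DecidableRel (WAdj n k) := fun a b =>
  match a, b with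
  | Sum.inl p, Sum.inr q =>
      inferInstanceAs (Decidable (q.1 = p.1 ∨ (p.1 = q.1 + 1 ∧ p.2 = q.2)))
  | Sum.inr q, Sum.inl p =>
      inferInstanceAs (Decidable (q.1 = p.1 ∨ (p.1 = q.1 + 1 ∧ p.2 = q.2)))
  | Sum.inl _, Sum.inl _ => inferInstanceAs (Decidable False)
  | Sum.inr _, Sum.inr _ => inferInstanceAs (Decidable False)

instance (n k : ℕ) : DecidableRel (W n k).Adj :=
  inferInstanceAs (DecidableRel (WAdj n k))

/-- The vertex set of `P_{n,k}`: all vertices of `W_{n,k}` except `w_{0,1}, …, w_{0,k}`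
(the `w`-vertices whose first index is `n ≡ 0 (mod n)`). -/
def PVert (n k : ℕ) : Set (WVert n k) :=
  {x | ∀ j : Fin k, x ≠ Sum.inr ((0 : ZMod n), j)}

instance (n k : ℕ) : DecidablePred (· ∈ PVert n k) := fun x =>
  inferInstanceAs (Decidable (∀ j : Fin k, x ≠ Sum.inr ((0 : ZMod n), j)))

/-- `P_{n,k}`: the induced subgraph of `W_{n,k}` obtained by deleting the `k` vertices
`w_{0,1}, …, w_{0,k}`. -/
def P (n k : ℕ) : SimpleGraph (PVert n k) := (W n k).induce (PVert n k)

instance (n k : ℕ) : DecidableRel (P n k).Adj := fun a b =>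
  inferInstanceAs (Decidable ((W n k).Adj a.1 b.1))




section Spectral
variable {ι : Type*} [Fintype ι] [DecidableEq ι] {A : Matrix ι ι ℝ}

lemma charpoly_diagonal_real (d : ι → ℝ) :
    (Matrix.diagonal d).charpoly = ∏ i, (X - C (d i)) := by
  have h : (Matrix.diagonal d).charmatrix = Matrix.diagonal fun i => (X : ℝ[X]) - C (d i) := by
    ext i j
    by_cases h : i = j
    · subst h; simp
    · simp [Matrix.charmatrix_apply_ne _ _ _ h, Matrix.diagonal_apply_ne _ h]
  rw [Matrix.charpoly, h, Matrix.det_diagonal]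

lemma charpoly_eq_prod (hA : A.IsHermitian) :
    A.charpoly = ∏ i, (X - C (hA.eigenvalues i)) := by
  classical
  let b : Module.Basis ι ℝ (ι → ℝ) :=
    (hA.eigenvectorBasis.toBasis).map (WithLp.linearEquiv 2 ℝ (ι → ℝ))
  let f : ((ι → ℝ) →ₗ[ℝ] (ι → ℝ)) := Matrix.toLin' A
  have hb : ∀ i, b i = ⇑(hA.eigenvectorBasis i) := fun i => rfl
  have hmat : LinearMap.toMatrix b b f = Matrix.diagonal hA.eigenvalues := by
    ext i j
    rw [LinearMap.toMatrix_apply]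
    have h2 : f (b j) = hA.eigenvalues j • b j := by
      show A *ᵥ (b j) = _
      rw [hb, hA.mulVec_eigenvectorBasis]
    rw [h2, _root_.map_smul]
    by_cases h : i = j
    · subst h; simp [Module.Basis.repr_self, Matrix.diagonal_apply]
    · simp [Module.Basis.repr_self, Finsupp.single_apply, Matrix.diagonal_apply, h, Ne.symm h]
  have h1 : A.charpoly = f.charpoly := by
    rw [← LinearMap.charpoly_toMatrix f (Pi.basisFun ℝ ι),
      LinearMap.toMatrix_eq_toMatrix', LinearMap.toMatrix'_toLin']
  rw [h1, ← LinearMap.charpoly_toMatrix f b, hmat, charpoly_diagonal_real]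

lemma roots_charpoly (hA : A.IsHermitian) :
    A.charpoly.roots = Finset.univ.val.map hA.eigenvalues := by
  rw [charpoly_eq_prod hA]
  rw [Finset.prod_eq_multiset_prod]
  rw [Polynomial.roots_multiset_prod]
  · rw [Multiset.bind_map]
    simp [Polynomial.roots_X_sub_C, Multiset.bind_singleton]
  · intro h
    rw [Multiset.mem_map] at h
    obtain ⟨i, _, hi⟩ := h
    exact X_sub_C_ne_zero _ hi

end Spectral



section Count
variable {ι : Type*} [Fintype ι] [DecidableEq ι] {A : Matrix ι ι ℝ}

noncomputable def evec (hA : A.IsHermitian) (i : ι) : ι → ℝ := ⇑(hA.eigenvectorBasis i)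

lemma dot_evec (hA : A.IsHermitian) (i j : ι) :
    evec hA i ⬝ᵥ evec hA j = if i = j then 1 else 0 := by
  have h := hA.eigenvectorBasis.orthonormal
  rw [orthonormal_iff_ite] at h
  have h2 := h i j
  rw [← h2]
  simp [PiLp.inner_apply, dotProduct, evec, mul_comm]

lemma mulVec_evec (hA : A.IsHermitian) (i : ι) :
    A *ᵥ evec hA i = hA.eigenvalues i • evec hA i := hA.mulVec_eigenvectorBasis i


lemma sum_dotProduct' {γ : Type*} (S : Finset γ) (f : γ → ι → ℝ) (v : ι → ℝ) :
    (∑ i ∈ S, f i) ⬝ᵥ v = ∑ i ∈ S, f i ⬝ᵥ v := by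
  simp only [dotProduct, Finset.sum_apply, Finset.sum_mul]
  exact Finset.sum_comm

lemma dotProduct_sum' {γ : Type*} (S : Finset γ) (v : ι → ℝ) (f : γ → ι → ℝ) :
    v ⬝ᵥ (∑ i ∈ S, f i) = ∑ i ∈ S, v ⬝ᵥ f i := by
  simp only [dotProduct, Finset.sum_apply, Finset.mul_sum]
  exact Finset.sum_comm

lemma dot_sum_sum (hA : A.IsHermitian) (S : Finset ι) (a b : ι → ℝ) :
    (∑ i ∈ S, a i • evec hA i) ⬝ᵥ (∑ i ∈ S, b i • evec hA i) = ∑ i ∈ S, a i * b i := by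
  rw [sum_dotProduct']
  refine Finset.sum_congr rfl fun i hi => ?_
  rw [dotProduct_sum']
  have : ∀ j ∈ S, (a i • evec hA i) ⬝ᵥ (b j • evec hA j)
      = if j = i then a i * b i else 0 := by
    intro j hj
    rw [smul_dotProduct, dotProduct_smul, dot_evec hA i j]
    by_cases h : i = j
    · subst h; simp [mul_comm]
    · simp [h, Ne.symm h]
  rw [Finset.sum_congr rfl this, Finset.sum_ite_eq' S i]
  simp [hi]

lemma mulVec_sum_evec (hA : A.IsHermitian) (S : Finset ι) (c : ι → ℝ) :
    A *ᵥ (∑ i ∈ S, c i • evec hA i)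
      = ∑ i ∈ S, (c i * hA.eigenvalues i) • evec hA i := by
  have : A *ᵥ (∑ i ∈ S, c i • evec hA i) = A.mulVecLin (∑ i ∈ S, c i • evec hA i) := rfl
  rw [this, map_sum]
  refine Finset.sum_congr rfl fun i _ => ?_
  rw [LinearMap.map_smul, Matrix.mulVecLin_apply, mulVec_evec hA, smul_smul, mul_comm]

lemma count_core (hA : A.IsHermitian) (S : Finset ι) (K : Submodule ℝ (ι → ℝ))
    (h : ∀ x ∈ K, ∀ c : ι → ℝ, x = ∑ i ∈ S, c i • evec hA i → x = 0) :
    S.card + Module.finrank ℝ K ≤ Fintype.card ι := by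
  classical
  let Φ : ({ x // x ∈ S } → ℝ) →ₗ[ℝ] (ι → ℝ) :=
    { toFun := fun c => ∑ i ∈ S.attach, c i • evec hA i.1
      map_add' := by
        intro c d
        rw [← Finset.sum_add_distrib]
        refine Finset.sum_congr rfl fun i _ => ?_
        simp [add_smul]
      map_smul' := by
        intro r c
        rw [Finset.smul_sum]
        refine Finset.sum_congr rfl fun i _ => ?_
        simp [smul_smul] }
  have hrep : ∀ c : { x // x ∈ S } → ℝ, Φ c =
      ∑ i ∈ S, (fun i => if h : i ∈ S then c ⟨i, h⟩ else 0) i • evec hA i := by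
    intro c
    rw [← Finset.sum_attach S (fun i => (if h : i ∈ S then c ⟨i, h⟩ else 0) • evec hA i)]
    refine Finset.sum_congr rfl fun i _ => ?_
    rw [dif_pos i.2]
  have hinj : Function.Injective Φ := by
    rw [← LinearMap.ker_eq_bot, LinearMap.ker_eq_bot']
    intro c hc
    funext j
    have h0 : (Φ c) ⬝ᵥ evec hA j.1 = c j := by
      show (∑ i ∈ S.attach, c i • evec hA i.1) ⬝ᵥ evec hA j.1 = c j
      rw [sum_dotProduct']
      have : ∀ i ∈ S.attach, (c i • evec hA i.1) ⬝ᵥ evec hA j.1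
          = if i = j then c j else 0 := by
        intro i _
        rw [smul_dotProduct, dot_evec hA]
        by_cases h : i = j
        · subst h; simp
        · have : ¬ (i.1 = j.1) := fun hh => h (Subtype.ext hh)
          simp [h, this]
      rw [Finset.sum_congr rfl this, Finset.sum_ite_eq' _ j]
      simp [Finset.mem_attach]
    rw [hc] at h0
    simpa using h0.symm
  have hrange : LinearMap.range Φ ⊓ K = ⊥ := by
    rw [Submodule.eq_bot_iff]
    rintro x ⟨⟨c, hc⟩, hxK⟩
    exact h x hxK _ (by rw [← hc, hrep])
  have h1 : Module.finrank ℝ (LinearMap.range Φ) = S.card := by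
    rw [LinearMap.finrank_range_of_inj hinj, Module.finrank_pi, Fintype.card_coe]
  have h2 := Submodule.finrank_sup_add_finrank_inf_eq (LinearMap.range Φ) K
  rw [hrange, h1] at h2
  have h3 : Module.finrank ℝ ((LinearMap.range Φ) ⊔ K : Submodule ℝ (ι → ℝ))
      ≤ Fintype.card ι := by
    have := Submodule.finrank_le ((LinearMap.range Φ) ⊔ K : Submodule ℝ (ι → ℝ))
    rwa [Module.finrank_pi] at this
  simp only [finrank_bot, add_zero] at h2
  omega

lemma count_lt (hA : A.IsHermitian) (c : ℝ) (K : Submodule ℝ (ι → ℝ))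
    (hK : ∀ x ∈ K, c * (x ⬝ᵥ x) ≤ (A *ᵥ x) ⬝ᵥ (A *ᵥ x)) :
    (Finset.univ.filter fun i => (hA.eigenvalues i)^2 < c).card + Module.finrank ℝ K
      ≤ Fintype.card ι := by
  classical
  set S := Finset.univ.filter fun i => (hA.eigenvalues i)^2 < c with hS
  apply count_core hA S K
  intro x hx d hd
  by_contra hne
  have hd0 : ∃ i ∈ S, d i ≠ 0 := by
    by_contra hall
    push_neg at hall
    exact hne (by rw [hd, Finset.sum_congr rfl fun i hi => by rw [hall i hi, zero_smul],
      Finset.sum_const_zero])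
  obtain ⟨i0, hi0S, hi0⟩ := hd0
  have hxx : x ⬝ᵥ x = ∑ i ∈ S, d i * d i := by rw [hd, dot_sum_sum]
  have hAx : (A *ᵥ x) ⬝ᵥ (A *ᵥ x)
      = ∑ i ∈ S, (d i * hA.eigenvalues i) * (d i * hA.eigenvalues i) := by
    rw [hd, mulVec_sum_evec, dot_sum_sum]
  have hpos : 0 < ∑ i ∈ S, (c - (hA.eigenvalues i)^2) * (d i * d i) := by
    apply Finset.sum_pos'
    · intro i hi
      have : (hA.eigenvalues i)^2 < c := (Finset.mem_filter.mp hi).2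
      have h2 : (0:ℝ) ≤ d i * d i := mul_self_nonneg _
      nlinarith
    · refine ⟨i0, hi0S, ?_⟩
      have : (hA.eigenvalues i0)^2 < c := (Finset.mem_filter.mp hi0S).2
      have h2 : (0:ℝ) < d i0 * d i0 := mul_self_pos.mpr hi0
      nlinarith
  have hexp : ∑ i ∈ S, (c - (hA.eigenvalues i)^2) * (d i * d i)
      = c * (x ⬝ᵥ x) - (A *ᵥ x) ⬝ᵥ (A *ᵥ x) := by
    rw [hxx, hAx, Finset.mul_sum, ← Finset.sum_sub_distrib]
    refine Finset.sum_congr rfl fun i _ => ?_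
    ring
  have := hK x hx
  rw [hexp] at hpos
  linarith

lemma count_gt (hA : A.IsHermitian) (c : ℝ) (V : Submodule ℝ (ι → ℝ))
    (hV : ∀ x ∈ V, (A *ᵥ x) ⬝ᵥ (A *ᵥ x) ≤ c * (x ⬝ᵥ x)) :
    (Finset.univ.filter fun i => c < (hA.eigenvalues i)^2).card + Module.finrank ℝ V
      ≤ Fintype.card ι := by
  classical
  set S := Finset.univ.filter fun i => c < (hA.eigenvalues i)^2 with hS
  apply count_core hA S V
  intro x hx d hd
  by_contra hne
  have hd0 : ∃ i ∈ S, d i ≠ 0 := by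
    by_contra hall
    push_neg at hall
    exact hne (by rw [hd, Finset.sum_congr rfl fun i hi => by rw [hall i hi, zero_smul],
      Finset.sum_const_zero])
  obtain ⟨i0, hi0S, hi0⟩ := hd0
  have hxx : x ⬝ᵥ x = ∑ i ∈ S, d i * d i := by rw [hd, dot_sum_sum]
  have hAx : (A *ᵥ x) ⬝ᵥ (A *ᵥ x)
      = ∑ i ∈ S, (d i * hA.eigenvalues i) * (d i * hA.eigenvalues i) := by
    rw [hd, mulVec_sum_evec, dot_sum_sum]
  have hpos : 0 < ∑ i ∈ S, ((hA.eigenvalues i)^2 - c) * (d i * d i) := by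
    apply Finset.sum_pos'
    · intro i hi
      have : c < (hA.eigenvalues i)^2 := (Finset.mem_filter.mp hi).2
      have h2 : (0:ℝ) ≤ d i * d i := mul_self_nonneg _
      nlinarith
    · refine ⟨i0, hi0S, ?_⟩
      have : c < (hA.eigenvalues i0)^2 := (Finset.mem_filter.mp hi0S).2
      have h2 : (0:ℝ) < d i0 * d i0 := mul_self_pos.mpr hi0
      nlinarith
  have hexp : ∑ i ∈ S, ((hA.eigenvalues i)^2 - c) * (d i * d i)
      = (A *ᵥ x) ⬝ᵥ (A *ᵥ x) - c * (x ⬝ᵥ x) := by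
    rw [hxx, hAx, Finset.mul_sum, ← Finset.sum_sub_distrib]
    refine Finset.sum_congr rfl fun i _ => ?_
    ring
  have := hV x hx
  rw [hexp] at hpos
  linarith

end Count

section Graph

variable {n k : ℕ} [NeZero n]

lemma mem_inl (i : ZMod n) (j : Fin k) : Sum.inl (i, j) ∈ PVert n k := by
  intro j' h
  exact Sum.inl_ne_inr h

lemma mem_inr_iff (i : ZMod n) (j : Fin k) :
    Sum.inr (i, j) ∈ PVert n k ↔ i ≠ 0 := by
  constructor
  · intro h hi
    exact h j (by rw [hi])
  · intro hi j' h
    injection h with h'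
    exact hi (congrArg Prod.fst h')

/-- zero extension of a vector on `PVert` to all of `WVert`. -/
def extv (x : ↥(PVert n k) → ℝ) : WVert n k → ℝ :=
  fun u => if h : u ∈ PVert n k then x ⟨u, h⟩ else 0

def Xv (x : ↥(PVert n k) → ℝ) (i : ZMod n) (j : Fin k) : ℝ := extv x (Sum.inl (i, j))
def Xw (x : ↥(PVert n k) → ℝ) (i : ZMod n) (j : Fin k) : ℝ := extv x (Sum.inr (i, j))
noncomputable def sv (x : ↥(PVert n k) → ℝ) (i : ZMod n) : ℝ := ∑ j, Xv x i j
noncomputable def tw (x : ↥(PVert n k) → ℝ) (i : ZMod n) : ℝ := ∑ j, Xw x i j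

lemma Xv_eq (x : ↥(PVert n k) → ℝ) (i : ZMod n) (j : Fin k) :
    Xv x i j = x ⟨Sum.inl (i, j), mem_inl i j⟩ := by
  rw [Xv, extv, dif_pos (mem_inl i j)]

lemma Xw_zero (x : ↥(PVert n k) → ℝ) (j : Fin k) : Xw x 0 j = 0 := by
  rw [Xw, extv, dif_neg]
  rw [mem_inr_iff]
  simp

lemma Xw_eq (x : ↥(PVert n k) → ℝ) {i : ZMod n} (hi : i ≠ 0) (j : Fin k) :
    Xw x i j = x ⟨Sum.inr (i, j), (mem_inr_iff i j).mpr hi⟩ := by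
  rw [Xw, extv, dif_pos ((mem_inr_iff i j).mpr hi)]

lemma sum_ext (g : ↥(PVert n k) → ℝ) :
    ∑ u, g u = ∑ w : WVert n k, (if h : w ∈ PVert n k then g ⟨w, h⟩ else 0) := by
  classical
  have h1 : ∑ w ∈ Finset.univ.filter (· ∈ PVert n k),
        (if h : w ∈ PVert n k then g ⟨w, h⟩ else 0)
      = ∑ w : WVert n k, (if h : w ∈ PVert n k then g ⟨w, h⟩ else 0) :=
    Finset.sum_filter_of_ne (fun w _ hw => by by_contra hm; exact hw (dif_neg hm))
  have h2 : ∑ w ∈ Finset.univ.filter (· ∈ PVert n k),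
        (if h : w ∈ PVert n k then g ⟨w, h⟩ else 0)
      = ∑ u : ↥(PVert n k), (if h : (u : WVert n k) ∈ PVert n k then g ⟨u, h⟩ else 0) :=
    Finset.sum_subtype _ (by simp) _
  rw [← h1, h2]
  exact Finset.sum_congr rfl fun u _ => by rw [dif_pos u.2]

/-- the adjacency operator of `W n k` applied to the zero-extension. -/
noncomputable def AXf (x : ↥(PVert n k) → ℝ) : WVert n k → ℝ
  | Sum.inl p => tw x p.1 + Xw x (p.1 - 1) p.2
  | Sum.inr p => sv x p.1 + Xv x (p.1 + 1) p.2

lemma one_ne_zero_zmod (hn : 2 ≤ n) : (1 : ZMod n) ≠ 0 := by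
  haveI : Fact (1 < n) := ⟨hn⟩
  exact one_ne_zero

lemma ite_or_add {Pp Qp : Prop} [Decidable Pp] [Decidable Qp] (h : ¬(Pp ∧ Qp)) (a : ℝ) :
    (if Pp ∨ Qp then a else 0) = (if Pp then a else 0) + (if Qp then a else 0) := by
  by_cases hP : Pp <;> by_cases hQ : Qp <;> simp [hP, hQ]
  exact absurd ⟨hP, hQ⟩ h


lemma mulVec_eq_AXf (hn : 2 ≤ n) (x : ↥(PVert n k) → ℝ) (w : WVert n k)
    (h : w ∈ PVert n k) :
    ((P n k).adjMatrix ℝ *ᵥ x) ⟨w, h⟩ = AXf x w := by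
  classical
  have hone : (1 : ZMod n) ≠ 0 := one_ne_zero_zmod hn
  rw [SimpleGraph.adjMatrix_mulVec_apply, SimpleGraph.neighborFinset_eq_filter,
    Finset.sum_filter]
  have hstep : ∀ v : ↥(PVert n k),
      (if (P n k).Adj ⟨w, h⟩ v then x v else 0)
        = (if WAdj n k w (v : WVert n k) then extv x (v : WVert n k) else 0) := by
    intro v
    have hiff : (P n k).Adj ⟨w, h⟩ v ↔ WAdj n k w (v : WVert n k) := Iff.rfl
    rw [if_congr hiff rfl rfl]
    by_cases hAdj : WAdj n k w (v : WVert n k)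
    · rw [if_pos hAdj, if_pos hAdj, extv, dif_pos v.2]
    · rw [if_neg hAdj, if_neg hAdj]
  rw [Finset.sum_congr rfl fun v _ => hstep v,
    sum_ext (fun v : ↥(PVert n k) => if WAdj n k w (v : WVert n k) then extv x v else 0)]
  have hdite : ∀ w' : WVert n k,
      (if h' : w' ∈ PVert n k then
          (if WAdj n k w w' then extv x w' else 0) else 0)
        = (if WAdj n k w w' then extv x w' else 0) := by
    intro w'
    by_cases h' : w' ∈ PVert n k
    · rw [dif_pos h']
    · rw [dif_neg h']
      by_cases hAdj : WAdj n k w w'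
      · rw [if_pos hAdj, extv, dif_neg h']
      · rw [if_neg hAdj]
  rw [Finset.sum_congr rfl fun w' _ => hdite w']
  rcases w with ⟨i, j⟩ | ⟨i, j⟩
  · rw [Fintype.sum_sum_type]
    have h0 : ∀ q : ZMod n × Fin k,
        (if WAdj n k (Sum.inl (i, j)) (Sum.inl q) then extv x (Sum.inl q) else 0) = 0 := by
      intro q
      rw [if_neg]
      exact fun hf => hf.elim
    rw [Finset.sum_congr rfl fun q _ => h0 q, Finset.sum_const_zero, zero_add]
    have h1 : ∀ q : ZMod n × Fin k,
        (if WAdj n k (Sum.inl (i, j)) (Sum.inr q) then extv x (Sum.inr q) else 0)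
          = (if q.1 = i then Xw x q.1 q.2 else 0)
            + (if q = (i - 1, j) then Xw x q.1 q.2 else 0) := by
      intro q
      have hc : WAdj n k (Sum.inl (i, j)) (Sum.inr q) ↔ (q.1 = i ∨ q = (i - 1, j)) := by
        show (q.1 = i ∨ (i = q.1 + 1 ∧ j = q.2)) ↔ _
        constructor
        · rintro (hh | ⟨hh1, hh2⟩)
          · exact Or.inl hh
          · refine Or.inr (Prod.ext ?_ hh2.symm)
            rw [eq_sub_iff_add_eq, ← hh1]
        · rintro (hh | hh)
          · exact Or.inl hh
          · refine Or.inr ⟨?_, ?_⟩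
            · rw [hh]; simp
            · rw [hh]
      have hdisj : ¬(q.1 = i ∧ q = (i - 1, j)) := by
        rintro ⟨ha, hb⟩
        rw [hb] at ha
        simp only at ha
        exact hone (by rwa [sub_eq_self] at ha)
      rw [if_congr hc rfl rfl, ite_or_add hdisj]
      rfl
    rw [Finset.sum_congr rfl fun q _ => h1 q, Finset.sum_add_distrib]
    have h2 : ∑ q : ZMod n × Fin k, (if q.1 = i then Xw x q.1 q.2 else 0) = tw x i := by
      rw [Fintype.sum_prod_type]
      have : ∀ i' : ZMod n, ∑ l : Fin k, (if i' = i then Xw x i' l else 0)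
          = if i' = i then tw x i' else 0 := by
        intro i'
        by_cases hii : i' = i <;> simp [hii, tw]
      rw [Finset.sum_congr rfl fun i' _ => this i', Finset.sum_ite_eq' Finset.univ i]
      simp
    have h3 : ∑ q : ZMod n × Fin k, (if q = (i - 1, j) then Xw x q.1 q.2 else 0)
        = Xw x (i - 1) j := by
      rw [Finset.sum_ite_eq' Finset.univ ((i - 1, j) : ZMod n × Fin k)
        (fun q => Xw x q.1 q.2)]
      simp
    rw [h2, h3]
    rfl
  · rw [Fintype.sum_sum_type]
    have h0 : ∀ q : ZMod n × Fin k,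
        (if WAdj n k (Sum.inr (i, j)) (Sum.inr q) then extv x (Sum.inr q) else 0) = 0 := by
      intro q
      rw [if_neg]
      exact fun hf => hf.elim
    rw [Finset.sum_congr rfl fun q _ => h0 q, Finset.sum_const_zero, add_zero]
    have h1 : ∀ q : ZMod n × Fin k,
        (if WAdj n k (Sum.inr (i, j)) (Sum.inl q) then extv x (Sum.inl q) else 0)
          = (if i = q.1 then Xv x q.1 q.2 else 0)
            + (if q = (i + 1, j) then Xv x q.1 q.2 else 0) := by
      intro q
      have hc : WAdj n k (Sum.inr (i, j)) (Sum.inl q) ↔ (i = q.1 ∨ q = (i + 1, j)) := by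
        show (i = q.1 ∨ (q.1 = i + 1 ∧ q.2 = j)) ↔ _
        constructor
        · rintro (hh | ⟨hh1, hh2⟩)
          · exact Or.inl hh
          · exact Or.inr (Prod.ext hh1 hh2)
        · rintro (hh | hh)
          · exact Or.inl hh
          · refine Or.inr ⟨?_, ?_⟩
            · rw [hh]
            · rw [hh]
      have hdisj : ¬(i = q.1 ∧ q = (i + 1, j)) := by
        rintro ⟨ha, hb⟩
        rw [hb] at ha
        simp only at ha
        exact hone (by simpa using (left_eq_add.mp ha))
      rw [if_congr hc rfl rfl, ite_or_add hdisj]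
      rfl
    rw [Finset.sum_congr rfl fun q _ => h1 q, Finset.sum_add_distrib]
    have h2 : ∑ q : ZMod n × Fin k, (if i = q.1 then Xv x q.1 q.2 else 0) = sv x i := by
      rw [Fintype.sum_prod_type]
      have : ∀ i' : ZMod n, ∑ l : Fin k, (if i = i' then Xv x i' l else 0)
          = if i = i' then sv x i' else 0 := by
        intro i'
        by_cases hii : i = i' <;> simp [hii, sv]
      rw [Finset.sum_congr rfl fun i' _ => this i', Finset.sum_ite_eq Finset.univ i]
      simp
    have h3 : ∑ q : ZMod n × Fin k, (if q = (i + 1, j) then Xv x q.1 q.2 else 0)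
        = Xv x (i + 1) j := by
      rw [Finset.sum_ite_eq' Finset.univ ((i + 1, j) : ZMod n × Fin k)
        (fun q => Xv x q.1 q.2)]
      simp
    rw [h2, h3]
    rfl

lemma sum_shift (c : ZMod n) (f : ZMod n → ℝ) : ∑ i, f (i + c) = ∑ i, f i :=
  Fintype.sum_equiv (Equiv.addRight c) _ _ (fun _ => rfl)

lemma dot_self (x : ↥(PVert n k) → ℝ) :
    x ⬝ᵥ x = ∑ i, ∑ j, (Xv x i j)^2 + ∑ i, ∑ j, (Xw x i j)^2 := by
  classical
  have h1 : x ⬝ᵥ x = ∑ u, (x u)^2 := by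
    simp [dotProduct, pow_two]
  rw [h1, sum_ext (fun u => (x u)^2)]
  have h2 : ∀ w' : WVert n k,
      (if h : w' ∈ PVert n k then (x ⟨w', h⟩)^2 else 0) = (extv x w')^2 := by
    intro w'
    by_cases h : w' ∈ PVert n k
    · rw [dif_pos h, extv, dif_pos h]
    · rw [dif_neg h, extv, dif_neg h]
      simp
  rw [Finset.sum_congr rfl fun w' _ => h2 w', Fintype.sum_sum_type]
  rw [Fintype.sum_prod_type, Fintype.sum_prod_type]
  rfl

lemma normAx (hn : 2 ≤ n) (x : ↥(PVert n k) → ℝ) :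
    ((P n k).adjMatrix ℝ *ᵥ x) ⬝ᵥ ((P n k).adjMatrix ℝ *ᵥ x)
        + ∑ j, (sv x 0 + Xv x 1 j)^2
      = ∑ i, ∑ j, (tw x i + Xw x (i - 1) j)^2
        + ∑ i, ∑ j, (sv x i + Xv x (i + 1) j)^2 := by
  classical
  set Ax := (P n k).adjMatrix ℝ *ᵥ x with hAx
  have h1 : Ax ⬝ᵥ Ax = ∑ u, (Ax u)^2 := by
    simp [dotProduct, pow_two]
  have h2 : ∀ u : ↥(PVert n k), (Ax u)^2 = (AXf x (u : WVert n k))^2 := by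
    rintro ⟨w, h⟩
    rw [hAx, mulVec_eq_AXf hn x w h]
  rw [h1, Finset.sum_congr rfl fun u _ => h2 u,
    sum_ext (fun u : ↥(PVert n k) => (AXf x (u : WVert n k))^2), Fintype.sum_sum_type]
  have h3 : ∀ q : ZMod n × Fin k,
      (if h : (Sum.inl q : WVert n k) ∈ PVert n k then (AXf x (Sum.inl q))^2 else 0)
        = (AXf x (Sum.inl q))^2 := fun q => dif_pos (mem_inl q.1 q.2)
  have h4 : ∀ q : ZMod n × Fin k,
      (if h : (Sum.inr q : WVert n k) ∈ PVert n k then (AXf x (Sum.inr q))^2 else 0)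
        = (AXf x (Sum.inr q))^2 - (if q.1 = 0 then (AXf x (Sum.inr q))^2 else 0) := by
    intro q
    by_cases h : q.1 = 0
    · rw [dif_neg (by rw [mem_inr_iff]; simpa using h), if_pos h]
      ring
    · rw [dif_pos (by rw [mem_inr_iff]; exact h), if_neg h]
      ring
  rw [Finset.sum_congr rfl fun q _ => h3 q, Finset.sum_congr rfl fun q _ => h4 q,
    Finset.sum_sub_distrib]
  have h5 : ∑ q : ZMod n × Fin k, (if q.1 = 0 then (AXf x (Sum.inr q))^2 else 0)
      = ∑ j, (sv x 0 + Xv x 1 j)^2 := by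
    rw [Fintype.sum_prod_type]
    have : ∀ i' : ZMod n, ∑ l : Fin k, (if i' = 0 then (AXf x (Sum.inr (i', l)))^2 else 0)
        = if i' = 0 then ∑ l, (AXf x (Sum.inr (i', l)))^2 else 0 := by
      intro i'
      by_cases hii : i' = 0 <;> simp [hii]
    rw [Finset.sum_congr rfl fun i' _ => this i',
      Finset.sum_ite_eq' Finset.univ (0 : ZMod n)]
    simp only [Finset.mem_univ, if_pos]
    refine Finset.sum_congr rfl fun l _ => ?_
    show (sv x 0 + Xv x (0 + 1) l) ^ 2 = _
    rw [zero_add]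
  rw [h5]
  have h6 : ∑ q : ZMod n × Fin k, (AXf x (Sum.inl q))^2
      = ∑ i, ∑ j, (tw x i + Xw x (i - 1) j)^2 := by
    rw [Fintype.sum_prod_type]; rfl
  have h7 : ∑ q : ZMod n × Fin k, (AXf x (Sum.inr q))^2
      = ∑ i, ∑ j, (sv x i + Xv x (i + 1) j)^2 := by
    rw [Fintype.sum_prod_type]; rfl
  rw [h6, h7]
  ring

lemma expand_w (x : ↥(PVert n k) → ℝ) :
    ∑ i, ∑ j, (tw x i + Xw x (i - 1) j)^2
      = (k : ℝ) * ∑ i, (tw x i)^2 + 2 * ∑ i, tw x i * tw x (i + 1)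
        + ∑ i, ∑ j, (Xw x i j)^2 := by
  have h1 : ∀ i : ZMod n, ∑ j, (tw x i + Xw x (i - 1) j)^2
      = (k : ℝ) * (tw x i)^2 + 2 * (tw x i * tw x (i - 1)) + ∑ j, (Xw x (i - 1) j)^2 := by
    intro i
    have : ∀ j : Fin k, (tw x i + Xw x (i - 1) j)^2
        = (tw x i)^2 + 2 * (tw x i * Xw x (i - 1) j) + (Xw x (i - 1) j)^2 := by
      intro j; ring
    rw [Finset.sum_congr rfl fun j _ => this j, Finset.sum_add_distrib,
      Finset.sum_add_distrib, Finset.sum_const, ← Finset.mul_sum, ← Finset.mul_sum]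
    simp only [Finset.card_univ, Fintype.card_fin, nsmul_eq_mul]
    rw [show (∑ j, Xw x (i-1) j) = tw x (i-1) from rfl]
  rw [Finset.sum_congr rfl fun i _ => h1 i, Finset.sum_add_distrib, Finset.sum_add_distrib]
  rw [← Finset.mul_sum, ← Finset.mul_sum]
  have h2 : ∑ i : ZMod n, ∑ j, (Xw x (i - 1) j)^2 = ∑ i, ∑ j, (Xw x i j)^2 := by
    have := sum_shift (n := n) (-1) (fun i => ∑ j, (Xw x i j)^2)
    simpa [sub_eq_add_neg] using this
  have h3 : ∑ i : ZMod n, tw x i * tw x (i - 1) = ∑ i, tw x i * tw x (i + 1) := by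
    have := sum_shift (n := n) (1 : ZMod n) (fun i => tw x (i + 1) * tw x i)
    calc ∑ i : ZMod n, tw x i * tw x (i - 1)
        = ∑ i : ZMod n, tw x (i - 1 + 1) * tw x (i - 1) := by
          refine Finset.sum_congr rfl fun i _ => ?_
          rw [sub_add_cancel]
      _ = ∑ i : ZMod n, tw x (i + 1) * tw x i := by
          have := sum_shift (n := n) (-1) (fun i => tw x (i + 1) * tw x i)
          simpa [sub_eq_add_neg] using this
      _ = ∑ i, tw x i * tw x (i + 1) := by
          refine Finset.sum_congr rfl fun i _ => ?_
          ring
  rw [h2, h3]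

lemma expand_v (x : ↥(PVert n k) → ℝ) :
    ∑ i, ∑ j, (sv x i + Xv x (i + 1) j)^2
      = (k : ℝ) * ∑ i, (sv x i)^2 + 2 * ∑ i, sv x i * sv x (i + 1)
        + ∑ i, ∑ j, (Xv x i j)^2 := by
  have h1 : ∀ i : ZMod n, ∑ j, (sv x i + Xv x (i + 1) j)^2
      = (k : ℝ) * (sv x i)^2 + 2 * (sv x i * sv x (i + 1)) + ∑ j, (Xv x (i + 1) j)^2 := by
    intro i
    have : ∀ j : Fin k, (sv x i + Xv x (i + 1) j)^2
        = (sv x i)^2 + 2 * (sv x i * Xv x (i + 1) j) + (Xv x (i + 1) j)^2 := by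
      intro j; ring
    rw [Finset.sum_congr rfl fun j _ => this j, Finset.sum_add_distrib,
      Finset.sum_add_distrib, Finset.sum_const, ← Finset.mul_sum, ← Finset.mul_sum]
    simp only [Finset.card_univ, Fintype.card_fin, nsmul_eq_mul]
    rw [show (∑ j, Xv x (i+1) j) = sv x (i+1) from rfl]
  rw [Finset.sum_congr rfl fun i _ => h1 i, Finset.sum_add_distrib, Finset.sum_add_distrib]
  rw [← Finset.mul_sum, ← Finset.mul_sum]
  have h2 : ∑ i : ZMod n, ∑ j, (Xv x (i + 1) j)^2 = ∑ i, ∑ j, (Xv x i j)^2 :=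
    sum_shift (n := n) 1 (fun i => ∑ j, (Xv x i j)^2)
  rw [h2]

lemma master (hn : 2 ≤ n) (x : ↥(PVert n k) → ℝ) :
    ((P n k).adjMatrix ℝ *ᵥ x) ⬝ᵥ ((P n k).adjMatrix ℝ *ᵥ x)
        + ∑ j, (sv x 0 + Xv x 1 j)^2
      = x ⬝ᵥ x
        + ((k : ℝ) * ∑ i, (tw x i)^2 + 2 * ∑ i, tw x i * tw x (i + 1))
        + ((k : ℝ) * ∑ i, (sv x i)^2 + 2 * ∑ i, sv x i * sv x (i + 1)) := by
  rw [normAx hn, expand_w, expand_v, dot_self]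
  ring

lemma sq_sum_shift (u : ZMod n → ℝ) :
    ∑ i, (u i + u (i + 1))^2 = 2 * ∑ i, (u i)^2 + 2 * ∑ i, u i * u (i + 1) := by
  have h : ∀ i : ZMod n, (u i + u (i + 1))^2
      = (u i)^2 + (u (i + 1))^2 + 2 * (u i * u (i + 1)) := fun i => by ring
  rw [Finset.sum_congr rfl fun i _ => h i, Finset.sum_add_distrib, Finset.sum_add_distrib,
    sum_shift 1 (fun i => (u i)^2), ← Finset.mul_sum]
  ring

lemma sq_sub_shift (u : ZMod n → ℝ) :
    ∑ i, (u i - u (i + 1))^2 = 2 * ∑ i, (u i)^2 - 2 * ∑ i, u i * u (i + 1) := by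
  have h : ∀ i : ZMod n, (u i - u (i + 1))^2
      = (u i)^2 + (u (i + 1))^2 - 2 * (u i * u (i + 1)) := fun i => by ring
  rw [Finset.sum_congr rfl fun i _ => h i, Finset.sum_sub_distrib, Finset.sum_add_distrib,
    sum_shift 1 (fun i => (u i)^2), ← Finset.mul_sum]
  ring

lemma cyc_nonneg (hk2 : (2:ℝ) ≤ (k:ℝ)) (u : ZMod n → ℝ) :
    0 ≤ (k:ℝ) * ∑ i, (u i)^2 + 2 * ∑ i, u i * u (i + 1) := by
  have h1 := sq_sum_shift u
  have h2 : 0 ≤ ∑ i, (u i + u (i + 1))^2 := Finset.sum_nonneg fun i _ => sq_nonneg _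
  have h3 : 0 ≤ ∑ i, (u i)^2 := Finset.sum_nonneg fun i _ => sq_nonneg _
  nlinarith

lemma cyc_upper (u : ZMod n → ℝ) :
    (k:ℝ) * ∑ i, (u i)^2 + 2 * ∑ i, u i * u (i + 1)
      ≤ ((k:ℝ) + 2) * ∑ i, (u i)^2 := by
  have h1 := sq_sub_shift u
  have h2 : 0 ≤ ∑ i, (u i - u (i + 1))^2 := Finset.sum_nonneg fun i _ => sq_nonneg _
  nlinarith

lemma sq_sum_le_k (f : Fin k → ℝ) : (∑ j, f j)^2 ≤ (k:ℝ) * ∑ j, (f j)^2 := by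
  have h := sq_sum_le_card_mul_sum_sq (s := (Finset.univ : Finset (Fin k))) (f := f)
  simpa using h

lemma Xv_add (x y : ↥(PVert n k) → ℝ) (i : ZMod n) (j : Fin k) :
    Xv (x + y) i j = Xv x i j + Xv y i j := by
  rw [Xv_eq, Xv_eq, Xv_eq]; rfl

lemma Xv_smul (c : ℝ) (x : ↥(PVert n k) → ℝ) (i : ZMod n) (j : Fin k) :
    Xv (c • x) i j = c * Xv x i j := by
  rw [Xv_eq, Xv_eq]; rfl

lemma Xw_add (x y : ↥(PVert n k) → ℝ) (i : ZMod n) (j : Fin k) :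
    Xw (x + y) i j = Xw x i j + Xw y i j := by
  by_cases h : i = 0
  · subst h; rw [Xw_zero, Xw_zero, Xw_zero]; ring
  · rw [Xw_eq _ h, Xw_eq _ h, Xw_eq _ h]; rfl

lemma Xw_smul (c : ℝ) (x : ↥(PVert n k) → ℝ) (i : ZMod n) (j : Fin k) :
    Xw (c • x) i j = c * Xw x i j := by
  by_cases h : i = 0
  · subst h; rw [Xw_zero, Xw_zero]; ring
  · rw [Xw_eq _ h, Xw_eq _ h]; rfl

lemma sv_add (x y : ↥(PVert n k) → ℝ) (i : ZMod n) : sv (x + y) i = sv x i + sv y i := by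
  rw [sv, sv, sv, ← Finset.sum_add_distrib]
  exact Finset.sum_congr rfl fun j _ => Xv_add x y i j

lemma sv_smul (c : ℝ) (x : ↥(PVert n k) → ℝ) (i : ZMod n) : sv (c • x) i = c * sv x i := by
  rw [sv, sv, Finset.mul_sum]
  exact Finset.sum_congr rfl fun j _ => Xv_smul c x i j

lemma tw_add (x y : ↥(PVert n k) → ℝ) (i : ZMod n) : tw (x + y) i = tw x i + tw y i := by
  rw [tw, tw, tw, ← Finset.sum_add_distrib]
  exact Finset.sum_congr rfl fun j _ => Xw_add x y i j

lemma tw_smul (c : ℝ) (x : ↥(PVert n k) → ℝ) (i : ZMod n) : tw (c • x) i = c * tw x i := by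
  rw [tw, tw, Finset.mul_sum]
  exact Finset.sum_congr rfl fun j _ => Xw_smul c x i j

noncomputable def L1 (n k : ℕ) [NeZero n] : (↥(PVert n k) → ℝ) →ₗ[ℝ] (Fin k → ℝ) where
  toFun x := fun j => sv x 0 + Xv x 1 j
  map_add' x y := by funext j; simp only [sv_add, Xv_add, Pi.add_apply]; ring
  map_smul' c x := by
    funext j
    simp only [sv_smul, Xv_smul, Pi.smul_apply, smul_eq_mul, RingHom.id_apply]
    ring

noncomputable def LV (n k : ℕ) [NeZero n] :
    (↥(PVert n k) → ℝ) →ₗ[ℝ] ((ZMod n → ℝ) × (ZMod n → ℝ)) where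
  toFun x := (fun i => sv x i, fun i => tw x i)
  map_add' x y := by
    refine Prod.ext ?_ ?_ <;> funext i
    · simp [sv_add]
    · simp [tw_add]
  map_smul' c x := by
    refine Prod.ext ?_ ?_ <;> funext i
    · simp [sv_smul]
    · simp [tw_smul]

def zext (a : {i : ZMod n // i ≠ 0} → ℝ) : ZMod n → ℝ :=
  fun i => if h : i = 0 then 0 else a ⟨i, h⟩

lemma zext_zero (a : {i : ZMod n // i ≠ 0} → ℝ) : zext a 0 = 0 := by
  rw [zext, dif_pos rfl]

lemma zext_ne (a : {i : ZMod n // i ≠ 0} → ℝ) {i : ZMod n} (h : i ≠ 0) :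
    zext a i = a ⟨i, h⟩ := by
  rw [zext, dif_neg h]

noncomputable def Phi (n k : ℕ) [NeZero n] :
    (({i : ZMod n // i ≠ 0} → ℝ) × ({i : ZMod n // i ≠ 0} → ℝ)) →ₗ[ℝ]
      (↥(PVert n k) → ℝ) where
  toFun ab := fun u => Sum.elim (fun p : ZMod n × Fin k => zext ab.1 p.1)
    (fun p : ZMod n × Fin k => zext ab.2 p.1) u.1
  map_add' a b := by
    funext u
    rcases u with ⟨(p | p), hu⟩ <;>
    · simp only [Sum.elim_inl, Sum.elim_inr, Pi.add_apply, zext]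
      by_cases h : p.1 = 0 <;> simp [h]
  map_smul' c a := by
    funext u
    rcases u with ⟨(p | p), hu⟩ <;>
    · simp only [Sum.elim_inl, Sum.elim_inr, Pi.smul_apply, smul_eq_mul, RingHom.id_apply, zext]
      by_cases h : p.1 = 0 <;> simp [h]

lemma Xv_Phi (a b : {i : ZMod n // i ≠ 0} → ℝ) (i : ZMod n) (j : Fin k) :
    Xv (Phi n k (a, b)) i j = zext a i := by
  rw [Xv_eq]; rfl

lemma Xw_Phi (a b : {i : ZMod n // i ≠ 0} → ℝ) (i : ZMod n) (j : Fin k) :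
    Xw (Phi n k (a, b)) i j = zext b i := by
  by_cases h : i = 0
  · subst h; rw [Xw_zero, zext_zero]
  · rw [Xw_eq _ h]; rfl

lemma sv_Phi (a b : {i : ZMod n // i ≠ 0} → ℝ) (i : ZMod n) :
    sv (Phi n k (a, b)) i = (k:ℝ) * zext a i := by
  rw [sv, Finset.sum_congr rfl fun j _ => Xv_Phi a b i j, Finset.sum_const]
  simp [mul_comm]

lemma tw_Phi (a b : {i : ZMod n // i ≠ 0} → ℝ) (i : ZMod n) :
    tw (Phi n k (a, b)) i = (k:ℝ) * zext b i := by
  rw [tw, Finset.sum_congr rfl fun j _ => Xw_Phi a b i j, Finset.sum_const]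
  simp [mul_comm]

lemma herm : ((P n k).adjMatrix ℝ).IsHermitian := by
  ext i j
  simp only [Matrix.conjTranspose_apply, SimpleGraph.adjMatrix_apply, star_trivial]
  exact if_congr ((P n k).adj_comm j i) rfl rfl

lemma est_K1 (hn : 2 ≤ n) (hk : 2 ≤ k) :
    ∀ x ∈ LinearMap.ker (L1 n k), 1 * (x ⬝ᵥ x)
      ≤ ((P n k).adjMatrix ℝ *ᵥ x) ⬝ᵥ ((P n k).adjMatrix ℝ *ᵥ x) := by
  intro x hx
  have hk2 : (2:ℝ) ≤ (k:ℝ) := by exact_mod_cast hk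
  have hm := master hn x
  have h0 : ∀ j : Fin k, sv x 0 + Xv x 1 j = 0 :=
    fun j => congrFun (LinearMap.mem_ker.mp hx) j
  have hB : ∑ j, (sv x 0 + Xv x 1 j)^2 = 0 := by
    rw [Finset.sum_congr rfl fun j _ => by rw [h0 j]]
    simp
  have c1 := cyc_nonneg (n := n) hk2 (tw x)
  have c2 := cyc_nonneg (n := n) hk2 (sv x)
  rw [hB] at hm
  linarith

lemma est_V (hn : 2 ≤ n) :
    ∀ x ∈ LinearMap.ker (LV n k),
      ((P n k).adjMatrix ℝ *ᵥ x) ⬝ᵥ ((P n k).adjMatrix ℝ *ᵥ x) ≤ 1 * (x ⬝ᵥ x) := by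
  intro x hx
  have hm := master hn x
  have hpair := LinearMap.mem_ker.mp hx
  have hs : ∀ i : ZMod n, sv x i = 0 := fun i => congrFun (congrArg Prod.fst hpair) i
  have ht : ∀ i : ZMod n, tw x i = 0 := fun i => congrFun (congrArg Prod.snd hpair) i
  have h1 : ∑ i, (tw x i)^2 = 0 := by
    rw [Finset.sum_congr rfl fun i _ => by rw [ht i]]; simp
  have h2 : ∑ i, tw x i * tw x (i + 1) = 0 := by
    rw [Finset.sum_congr rfl fun i _ => by rw [ht i]]; simp
  have h3 : ∑ i, (sv x i)^2 = 0 := by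
    rw [Finset.sum_congr rfl fun i _ => by rw [hs i]]; simp
  have h4 : ∑ i, sv x i * sv x (i + 1) = 0 := by
    rw [Finset.sum_congr rfl fun i _ => by rw [hs i]]; simp
  have hB : 0 ≤ ∑ j, (sv x 0 + Xv x 1 j)^2 :=
    Finset.sum_nonneg fun j _ => sq_nonneg _
  rw [h1, h2, h3, h4] at hm
  linarith

lemma est_top (hn : 2 ≤ n) (hk : 2 ≤ k) :
    ∀ x ∈ (⊤ : Submodule ℝ (↥(PVert n k) → ℝ)),
      ((P n k).adjMatrix ℝ *ᵥ x) ⬝ᵥ ((P n k).adjMatrix ℝ *ᵥ x)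
        ≤ ((k:ℝ) + 1)^2 * (x ⬝ᵥ x) := by
  intro x _
  have hk2 : (2:ℝ) ≤ (k:ℝ) := by exact_mod_cast hk
  have hm := master hn x
  have hds := dot_self x
  have hB : 0 ≤ ∑ j, (sv x 0 + Xv x 1 j)^2 :=
    Finset.sum_nonneg fun j _ => sq_nonneg _
  have hu1 := cyc_upper (n := n) (k := k) (tw x)
  have hu2 := cyc_upper (n := n) (k := k) (sv x)
  have hcs1 : ∑ i, (tw x i)^2 ≤ (k:ℝ) * ∑ i, ∑ j, (Xw x i j)^2 := by
    rw [Finset.mul_sum]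
    exact Finset.sum_le_sum fun i _ => sq_sum_le_k (fun j => Xw x i j)
  have hcs2 : ∑ i, (sv x i)^2 ≤ (k:ℝ) * ∑ i, ∑ j, (Xv x i j)^2 := by
    rw [Finset.mul_sum]
    exact Finset.sum_le_sum fun i _ => sq_sum_le_k (fun j => Xv x i j)
  have hXw : 0 ≤ ∑ i, ∑ j, (Xw x i j)^2 :=
    Finset.sum_nonneg fun i _ => Finset.sum_nonneg fun j _ => sq_nonneg _
  have hXv : 0 ≤ ∑ i, ∑ j, (Xv x i j)^2 :=
    Finset.sum_nonneg fun i _ => Finset.sum_nonneg fun j _ => sq_nonneg _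
  have h5 : ((k:ℝ) + 2) * ∑ i, (tw x i)^2
      ≤ ((k:ℝ) + 2) * ((k:ℝ) * ∑ i, ∑ j, (Xw x i j)^2) :=
    mul_le_mul_of_nonneg_left hcs1 (by linarith)
  have h6 : ((k:ℝ) + 2) * ∑ i, (sv x i)^2
      ≤ ((k:ℝ) + 2) * ((k:ℝ) * ∑ i, ∑ j, (Xv x i j)^2) :=
    mul_le_mul_of_nonneg_left hcs2 (by linarith)
  have hst : 0 ≤ ∑ i, (tw x i)^2 := Finset.sum_nonneg fun i _ => sq_nonneg _
  have hss : 0 ≤ ∑ i, (sv x i)^2 := Finset.sum_nonneg fun i _ => sq_nonneg _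
  nlinarith

lemma est_K2 (hn : 2 ≤ n) (hk : 2 ≤ k) :
    ∀ x ∈ LinearMap.range (Phi n k), ((k:ℝ) - 1)^2 * (x ⬝ᵥ x)
      ≤ ((P n k).adjMatrix ℝ *ᵥ x) ⬝ᵥ ((P n k).adjMatrix ℝ *ᵥ x) := by
  rintro x ⟨⟨a, b⟩, rfl⟩
  have hk2 : (2:ℝ) ≤ (k:ℝ) := by exact_mod_cast hk
  have hm := master hn (Phi n k (a, b))
  have hds := dot_self (Phi n k (a, b))
  have e1 : ∑ i, ∑ j, (Xv (Phi n k (a, b)) i j)^2 = (k:ℝ) * ∑ i, (zext a i)^2 := by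
    rw [Finset.mul_sum]
    refine Finset.sum_congr rfl fun i _ => ?_
    rw [Finset.sum_congr rfl fun j (_ : j ∈ Finset.univ) => by rw [Xv_Phi a b i j],
      Finset.sum_const]
    simp [mul_comm]
  have e2 : ∑ i, ∑ j, (Xw (Phi n k (a, b)) i j)^2 = (k:ℝ) * ∑ i, (zext b i)^2 := by
    rw [Finset.mul_sum]
    refine Finset.sum_congr rfl fun i _ => ?_
    rw [Finset.sum_congr rfl fun j (_ : j ∈ Finset.univ) => by rw [Xw_Phi a b i j],
      Finset.sum_const]
    simp [mul_comm]
  have e3 : ∑ i, (sv (Phi n k (a, b)) i)^2 = (k:ℝ)^2 * ∑ i, (zext a i)^2 := by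
    rw [Finset.mul_sum]
    refine Finset.sum_congr rfl fun i _ => ?_
    rw [sv_Phi]; ring
  have e4 : ∑ i, (tw (Phi n k (a, b)) i)^2 = (k:ℝ)^2 * ∑ i, (zext b i)^2 := by
    rw [Finset.mul_sum]
    refine Finset.sum_congr rfl fun i _ => ?_
    rw [tw_Phi]; ring
  have e5 : ∑ i, sv (Phi n k (a, b)) i * sv (Phi n k (a, b)) (i + 1)
      = (k:ℝ)^2 * ∑ i, zext a i * zext a (i + 1) := by
    rw [Finset.mul_sum]
    refine Finset.sum_congr rfl fun i _ => ?_
    rw [sv_Phi, sv_Phi]; ring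
  have e6 : ∑ i, tw (Phi n k (a, b)) i * tw (Phi n k (a, b)) (i + 1)
      = (k:ℝ)^2 * ∑ i, zext b i * zext b (i + 1) := by
    rw [Finset.mul_sum]
    refine Finset.sum_congr rfl fun i _ => ?_
    rw [tw_Phi, tw_Phi]; ring
  have e7 : ∑ j : Fin k, (sv (Phi n k (a, b)) 0 + Xv (Phi n k (a, b)) 1 j)^2
      = (k:ℝ) * (zext a 1)^2 := by
    have h : ∀ j : Fin k, (sv (Phi n k (a, b)) 0 + Xv (Phi n k (a, b)) 1 j)^2
        = (zext a 1)^2 := by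
      intro j
      rw [sv_Phi, Xv_Phi, zext_zero]
      ring
    rw [Finset.sum_congr rfl fun j _ => h j, Finset.sum_const]
    simp [mul_comm]
  rw [hds, e1, e2] at hm ⊢
  rw [e3, e4, e5, e6, e7] at hm
  -- single–term bounds
  have ha : (zext a 1)^2 ≤ 2 * ∑ i, (zext a i)^2 + 2 * ∑ i, zext a i * zext a (i + 1) := by
    rw [← sq_sum_shift (zext a)]
    have h := Finset.single_le_sum
      (f := fun i : ZMod n => (zext a i + zext a (i + 1))^2)
      (fun i _ => sq_nonneg _) (Finset.mem_univ (0 : ZMod n))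
    calc (zext a 1)^2 = (zext a 0 + zext a (0 + 1))^2 := by rw [zext_zero, zero_add, zero_add]
      _ ≤ _ := h
  have hb : (0:ℝ) ≤ 2 * ∑ i, (zext b i)^2 + 2 * ∑ i, zext b i * zext b (i + 1) := by
    rw [← sq_sum_shift (zext b)]
    exact Finset.sum_nonneg fun i _ => sq_nonneg _
  have hA2 : (k:ℝ)^2 * (zext a 1)^2
      ≤ (k:ℝ)^2 * (2 * ∑ i, (zext a i)^2 + 2 * ∑ i, zext a i * zext a (i + 1)) :=
    mul_le_mul_of_nonneg_left ha (by positivity)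
  have hB2 : (0:ℝ)
      ≤ (k:ℝ)^2 * (2 * ∑ i, (zext b i)^2 + 2 * ∑ i, zext b i * zext b (i + 1)) :=
    mul_nonneg (by positivity) hb
  have hkk : (k:ℝ) ≤ (k:ℝ)^2 := by nlinarith [hk2]
  have hC : (k:ℝ) * (zext a 1)^2 ≤ (k:ℝ)^2 * (zext a 1)^2 :=
    mul_le_mul_of_nonneg_right hkk (sq_nonneg _)
  nlinarith [hm, hA2, hB2, hC]

lemma Phi_inj (hk : 2 ≤ k) : Function.Injective (Phi n k) := by
  rw [← LinearMap.ker_eq_bot]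
  rw [Submodule.eq_bot_iff]
  rintro ⟨a, b⟩ hab
  have h := LinearMap.mem_ker.mp hab
  have j0 : Fin k := ⟨0, by omega⟩
  have ha : a = 0 := by
    funext ⟨i, hi⟩
    have h2 := congrFun h ⟨Sum.inl (i, j0), mem_inl i j0⟩
    have h3 : zext a i = 0 := h2
    rwa [zext_ne a hi] at h3
  have hb : b = 0 := by
    funext ⟨i, hi⟩
    have h2 := congrFun h ⟨Sum.inr (i, j0), (mem_inr_iff i j0).mpr hi⟩
    have h3 : zext b i = 0 := h2
    rwa [zext_ne b hi] at h3
  rw [ha, hb]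
  rfl

lemma card_ne_zero_zmod : Fintype.card {i : ZMod n // i ≠ 0} = n - 1 := by
  have h1 : Fintype.card {i : ZMod n // ¬ (i = 0)}
      = Fintype.card (ZMod n) - Fintype.card {i : ZMod n // i = 0} :=
    Fintype.card_subtype_compl _
  rw [ZMod.card, Fintype.card_subtype_eq (0 : ZMod n)] at h1
  exact h1

lemma exc_classify (hk2 : (2:ℝ) ≤ (k:ℝ)) (μ : ℝ)
    (h : μ ∉ ({-1, 1} ∪ Set.Icc ((k : ℝ) - 1) ((k : ℝ) + 1) ∪
      Set.Icc (-(k : ℝ) - 1) (-(k : ℝ) + 1) : Set ℝ)) :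
    μ^2 < 1 ∨ (1 < μ^2 ∧ μ^2 < ((k:ℝ)-1)^2) ∨ ((k:ℝ)+1)^2 < μ^2 := by
  simp only [Set.mem_union, Set.mem_insert_iff, Set.mem_singleton_iff, Set.mem_Icc] at h
  push_neg at h
  obtain ⟨⟨⟨hm1, h1⟩, hI1⟩, hI2⟩ := h
  by_cases ha : μ^2 < 1
  · left; exact ha
  push_neg at ha
  have hne : μ^2 ≠ 1 := by
    intro he
    have hz : (μ - 1) * (μ + 1) = 0 := by nlinarith
    rcases mul_eq_zero.mp hz with h' | h'
    · exact h1 (by linarith)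
    · exact hm1 (by linarith)
  have h1' : 1 < μ^2 := lt_of_le_of_ne ha (Ne.symm hne)
  by_cases hb : μ^2 < ((k:ℝ)-1)^2
  · right; left; exact ⟨h1', hb⟩
  push_neg at hb
  right; right
  rcases le_or_gt 0 μ with hpos | hneg
  · have hge : (k:ℝ) - 1 ≤ μ := by nlinarith
    have hlt : (k:ℝ) + 1 < μ := hI1 hge
    nlinarith
  · have hle : μ ≤ -(k:ℝ) + 1 := by nlinarith
    rcases le_or_gt (-(k:ℝ) - 1) μ with hc | hc
    · have hlt : -(k:ℝ) + 1 < μ := hI2 hc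
      linarith
    · nlinarith

end Graph

/-- At most `3k` of the eigenvalues of `P_{n,k}` (counted with multiplicity, i.e. as
roots of the characteristic polynomial of its adjacency matrix) lie outside the set
`{−1, 1} ∪ [k−1, k+1] ∪ [−k−1, −k+1]`. -/
theorem P_few_exceptional_eigenvalues (n k : ℕ) [NeZero n] (hn : 2 ≤ n) (hk : 2 ≤ k) :
    Multiset.card
      (((P n k).adjMatrix ℝ).charpoly.roots.filter
        (fun μ => μ ∉ ({-1, 1} ∪ Set.Icc ((k : ℝ) - 1) ((k : ℝ) + 1) ∪
          Set.Icc (-(k : ℝ) - 1) (-(k : ℝ) + 1) : Set ℝ))) ≤ 3 * k := by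
  classical
  have hA : ((P n k).adjMatrix ℝ).IsHermitian := herm
  set SET : Set ℝ := ({-1, 1} ∪ Set.Icc ((k : ℝ) - 1) ((k : ℝ) + 1) ∪
      Set.Icc (-(k : ℝ) - 1) (-(k : ℝ) + 1) : Set ℝ) with hSET
  rw [roots_charpoly hA, Multiset.filter_map, Multiset.card_map]
  have key : ∀ (D : DecidablePred ((fun μ => μ ∉ SET) ∘ hA.eigenvalues)),
      Multiset.card (@Multiset.filter _ _ D Finset.univ.val) ≤ 3 * k := by
    intro D
    have he : @Multiset.filter _ _ D Finset.univ.val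
        = (Finset.univ.filter (fun i => hA.eigenvalues i ∉ SET)).val := by
      rw [Finset.filter_val]
      exact Multiset.filter_congr fun x _ => Iff.rfl
    rw [he]
    show (Finset.univ.filter (fun i => hA.eigenvalues i ∉ SET)).card ≤ 3 * k
    set lam := hA.eigenvalues with hlam
    set m := Fintype.card ↥(PVert n k) with hmdef
    have hk2 : (2:ℝ) ≤ (k:ℝ) := by exact_mod_cast hk
    set S1 := Finset.univ.filter (fun i => (lam i)^2 < 1) with hS1def
    set S2 := Finset.univ.filter
      (fun i => 1 < (lam i)^2 ∧ (lam i)^2 < ((k:ℝ)-1)^2) with hS2def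
    set S3 := Finset.univ.filter (fun i => ((k:ℝ)+1)^2 < (lam i)^2) with hS3def
    have hsub : Finset.univ.filter (fun i => lam i ∉ SET) ⊆ (S1 ∪ S2) ∪ S3 := by
      intro i hi
      rw [Finset.mem_filter] at hi
      rw [Finset.mem_union, Finset.mem_union, hS1def, hS2def, hS3def,
        Finset.mem_filter, Finset.mem_filter, Finset.mem_filter]
      rcases exc_classify hk2 (lam i) hi.2 with h | h | h
      · exact Or.inl (Or.inl ⟨Finset.mem_univ i, h⟩)
      · exact Or.inl (Or.inr ⟨Finset.mem_univ i, h⟩)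
      · exact Or.inr ⟨Finset.mem_univ i, h⟩
    have hcard : (Finset.univ.filter (fun i => lam i ∉ SET)).card
        ≤ S1.card + S2.card + S3.card := by
      refine le_trans (Finset.card_le_card hsub) ?_
      refine le_trans (Finset.card_union_le _ _) ?_
      have := Finset.card_union_le S1 S2
      omega
    have hfr : Module.finrank ℝ (↥(PVert n k) → ℝ) = m := Module.finrank_pi ℝ
    -- S1 bound
    have hS1b : S1.card + Module.finrank ℝ (LinearMap.ker (L1 n k)) ≤ m :=
      count_lt hA 1 _ (est_K1 hn hk)
    have hrk1 := LinearMap.finrank_range_add_finrank_ker (L1 n k)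
    rw [hfr] at hrk1
    have hr1le : Module.finrank ℝ (LinearMap.range (L1 n k)) ≤ k := by
      refine le_trans (Submodule.finrank_le _) ?_
      rw [Module.finrank_pi]
      simp
    -- S3 bound
    have hS3b : S3.card + Module.finrank ℝ (⊤ : Submodule ℝ (↥(PVert n k) → ℝ)) ≤ m :=
      count_gt hA (((k:ℝ)+1)^2) _ (est_top hn hk)
    have htop : Module.finrank ℝ (⊤ : Submodule ℝ (↥(PVert n k) → ℝ)) = m := by
      rw [finrank_top, hfr]
    -- middle bound
    set T1 := Finset.univ.filter (fun i => (lam i)^2 < ((k:ℝ)-1)^2) with hT1def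
    set T2 := Finset.univ.filter (fun i => (lam i)^2 ≤ 1) with hT2def
    set U2 := Finset.univ.filter (fun i => 1 < (lam i)^2) with hU2def
    have hT1b : T1.card + Module.finrank ℝ (LinearMap.range (Phi n k)) ≤ m :=
      count_lt hA (((k:ℝ)-1)^2) _ (est_K2 hn hk)
    have hPhirank : Module.finrank ℝ (LinearMap.range (Phi n k)) = (n-1) + (n-1) := by
      rw [LinearMap.finrank_range_of_inj (Phi_inj hk), Module.finrank_prod,
        Module.finrank_pi, card_ne_zero_zmod]
    have hU2b : U2.card + Module.finrank ℝ (LinearMap.ker (LV n k)) ≤ m :=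
      count_gt hA 1 _ (est_V hn)
    have hrkV := LinearMap.finrank_range_add_finrank_ker (LV n k)
    rw [hfr] at hrkV
    have hrVle : Module.finrank ℝ (LinearMap.range (LV n k)) ≤ n + n := by
      refine le_trans (Submodule.finrank_le _) ?_
      rw [Module.finrank_prod, Module.finrank_pi, ZMod.card]
    have hT2U2 : T2.card + U2.card = m := by
      have h := Finset.card_filter_add_card_filter_not
        (s := (Finset.univ : Finset ↥(PVert n k))) (p := fun i => (lam i)^2 ≤ 1)
      have h2 : Finset.univ.filter (fun i => ¬ ((lam i)^2 ≤ 1)) = U2 := by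
        rw [hU2def]
        exact Finset.filter_congr fun i _ => by rw [not_le]
      rw [h2] at h
      exact h.trans Finset.card_univ
    have hS2b : S2.card ≤ 2 := by
      by_cases h12 : (1:ℝ) < ((k:ℝ)-1)^2
      · have hT2T1 : T2 ⊆ T1 := by
          intro i hi
          rw [hT2def, Finset.mem_filter] at hi
          rw [hT1def, Finset.mem_filter]
          exact ⟨hi.1, lt_of_le_of_lt hi.2 h12⟩
        have hS2sub : S2 ⊆ T1 \ T2 := by
          intro i hi
          rw [hS2def, Finset.mem_filter] at hi
          rw [Finset.mem_sdiff, hT1def, hT2def, Finset.mem_filter, Finset.mem_filter]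
          refine ⟨⟨hi.1, hi.2.2⟩, ?_⟩
          intro hcon
          exact absurd hcon.2 (not_le.mpr hi.2.1)
        have h3 : S2.card ≤ T1.card - T2.card := by
          refine le_trans (Finset.card_le_card hS2sub) ?_
          rw [Finset.card_sdiff_of_subset hT2T1]
        omega
      · have : S2 = ∅ := by
          rw [Finset.eq_empty_iff_forall_notMem]
          intro i hi
          rw [hS2def, Finset.mem_filter] at hi
          push_neg at h12
          exact absurd (lt_of_lt_of_le hi.2.2 h12) (not_lt.mpr (le_of_lt hi.2.1))
        rw [this]
        simp
    omega
  exact key _
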